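/- Let L be a Lie algebra over a commutative ring k and let D : L → L be a k-linear derivation (D[a,b] = [Da,b] + [a,Db]) satisfying D ∘ D = 0. Then the derived bracket [a,b]_D := [Da, b] satisfies the left Leibniz (Loday) identity: [a,[b,c]_D]_D = [[a,b]_D, c]_D + [b,[a,c]_D]_D for all a, b, c ∈ L. -/
import Mathlib

/-- The derived bracket `[a,b]_D := ⁅D a, b⁆` of a differential Lie algebra
satisfies the left Leibniz (Loday) identity. -/
theorem derived_bracket_leibniz {k L : Type*} [CommRing k] [LieRing L] [LieAlgebra k L]
    (D : L →ₗ[k] L)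
    (hder : ∀ a b : L, D ⁅a, b⁆ = ⁅D a, b⁆ + ⁅a, D b⁆)
    (hsq : ∀ a : L, D (D a) = 0)
    (db : L → L → L) (hdb : ∀ a b : L, db a b = ⁅D a, b⁆)
    (a b c : L) :
    db a (db b c) = db (db a b) c + db b (db a c) := by
  rw [hdb, hdb, hdb, hdb, hdb, hdb, hder, hsq, zero_lie, zero_add, leibniz_lie]
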